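/- arXiv:2309.14229 — 7 statements merged into one kernel-verified Lean document; each statement's English description precedes it below -/
import Mathlib

section
/- Let D be a finite set, m ≥ 2, and X_1,…,X_m random variables taking values in D. If the total variation distance TV(X_i,X_j) = Σ_{d∈D} |P(X_i=d) − P(X_j=d)| is at most η for all pairs i<j, then Σ_{d∈D} P(X_1=d)⋯P(X_m=d) − 1/|D|^{m−1} ≥ −|D|^{m−2}·η (assuming |D|·η ≤ 1). -/
lemma abs_prod_sub_prod_le {n : ℕ} (a b : Fin n → ℝ)
    (ha : ∀ i, 0 ≤ a i ∧ a i ≤ 1) (hb : ∀ i, 0 ≤ b i ∧ b i ≤ 1) :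
    |∏ i, a i - ∏ i, b i| ≤ ∑ i, |a i - b i| := by
  induction n with
  | zero => simp
  | succ n ih =>
    rw [Fin.prod_univ_succ, Fin.prod_univ_succ, Fin.sum_univ_succ]
    have key : a 0 * ∏ i : Fin n, a i.succ - b 0 * ∏ i : Fin n, b i.succ
        = (a 0 - b 0) * ∏ i : Fin n, a i.succ
          + b 0 * (∏ i : Fin n, a i.succ - ∏ i : Fin n, b i.succ) := by ring
    rw [key]
    refine (abs_add_le _ _).trans ?_
    refine add_le_add ?_ ?_
    · rw [abs_mul]
      have : |∏ i : Fin n, a i.succ| ≤ 1 := by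
        rw [abs_of_nonneg (Finset.prod_nonneg fun i _ => (ha i.succ).1)]
        exact Finset.prod_le_one (fun i _ => (ha i.succ).1) (fun i _ => (ha i.succ).2)
      calc |a 0 - b 0| * |∏ i : Fin n, a i.succ| ≤ |a 0 - b 0| * 1 := by
            gcongr
        _ = |a 0 - b 0| := mul_one _
    · rw [abs_mul]
      calc |b 0| * |∏ i : Fin n, a i.succ - ∏ i : Fin n, b i.succ|
            ≤ 1 * |∏ i : Fin n, a i.succ - ∏ i : Fin n, b i.succ| := by
            gcongr; rw [abs_of_nonneg (hb 0).1]; exact (hb 0).2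
        _ ≤ ∑ i : Fin n, |a i.succ - b i.succ| := by
            rw [one_mul]; exact ih _ _ (fun i => ha i.succ) (fun i => hb i.succ)

/-- If the pairwise total variation distances between the distributions of
`X_1, …, X_m` on a finite set `D` are all at most `η`, then the correlation
`∑_d P(X_1=d)⋯P(X_m=d) − 1/|D|^{m−1}` is at least `−|D|^{m−2}·η`
(assuming `|D|·η ≤ 1`). -/
theorem stmt_0 {D : Type*} [Fintype D] (m : ℕ) (hm : 2 ≤ m)
    (P : Fin m → D → ℝ) (hP0 : ∀ i d, 0 ≤ P i d)
    (hP1 : ∀ i, ∑ d, P i d = 1) (η : ℝ)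
    (hTV : ∀ i j : Fin m, i < j → ∑ d, |P i d - P j d| ≤ η)
    (hη : (Fintype.card D : ℝ) * η ≤ 1) :
    (∑ d, ∏ i, P i d) - 1 / (Fintype.card D : ℝ) ^ (m - 1) ≥
      -((Fintype.card D : ℝ) ^ (m - 2) * η) := by
  obtain ⟨k, rfl⟩ : ∃ k, m = k + 2 := ⟨m - 2, by omega⟩
  clear hm
  set c : ℝ := (Fintype.card D : ℝ) with hc
  have hη0 : 0 ≤ η := by
    have h := hTV ⟨0, by omega⟩ ⟨1, by omega⟩ (by simp [Fin.lt_def])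
    exact le_trans (Finset.sum_nonneg fun d _ => abs_nonneg _) h
  have hPle1 : ∀ i d, P i d ≤ 1 := fun i d => by
    rw [← hP1 i]
    exact Finset.single_le_sum (fun d _ => hP0 i d) (Finset.mem_univ d)
  -- simplify exponents
  simp only [Nat.add_sub_cancel, show k + 2 - 1 = k + 1 from rfl]
  rcases Nat.lt_or_ge (Fintype.card D) 2 with hcard | hcard
  · -- card D ≤ 1; card D = 0 impossible
    interval_cases h : Fintype.card D
    · exfalso
      have hD : IsEmpty D := Fintype.card_eq_zero_iff.mp h
      have := hP1 0
      rw [Finset.sum_of_isEmpty] at this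
      norm_num at this
    · rcases Fintype.card_eq_one_iff.mp h with ⟨d0, hd0⟩
      have huniv : (Finset.univ : Finset D) = {d0} :=
        Finset.eq_singleton_iff_unique_mem.mpr ⟨Finset.mem_univ _, fun x _ => hd0 x⟩
      have hPd : ∀ i, P i d0 = 1 := fun i => by
        have := hP1 i; rwa [huniv, Finset.sum_singleton] at this
      rw [huniv, Finset.sum_singleton]
      have hcc : c = 1 := by simp [hc, h]
      simp [hPd, hcc]
      linarith
  · -- main case: card D ≥ 2
    have hc2 : (2 : ℝ) ≤ c := by rw [hc]; exact_mod_cast hcard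
    -- Step A: Jensen
    have hA : 1 / c ^ (k + 1) ≤ ∑ d, P 0 d ^ (k + 2) := by
      have := pow_sum_div_card_le_sum_pow (s := Finset.univ)
        (f := P 0) (fun d _ => hP0 0 d) (k + 1)
      rwa [hP1 0, one_pow, Finset.card_univ] at this
    -- Step B: pointwise product bound
    have hB : ∀ d, P 0 d ^ (k + 2) - (∑ i, |P i d - P 0 d|) ≤ ∏ i, P i d := by
      intro d
      have h2 := abs_prod_sub_prod_le (fun i => P i d) (fun _ => P 0 d)
        (fun i => ⟨hP0 i d, hPle1 i d⟩) (fun _ => ⟨hP0 0 d, hPle1 0 d⟩)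
      rw [Finset.prod_const, Finset.card_univ, Fintype.card_fin] at h2
      have := (abs_le.mp h2).1
      linarith
    -- Step C: sum of deviations
    have hC : ∑ d, ∑ i, |P i d - P 0 d| ≤ ((k : ℝ) + 1) * η := by
      rw [Finset.sum_comm]
      rw [Fin.sum_univ_succ]
      simp only [sub_self, abs_zero, Finset.sum_const_zero, zero_add]
      calc (∑ i : Fin (k + 1), ∑ d, |P i.succ d - P 0 d|)
          ≤ ∑ _i : Fin (k + 1), η := by
            refine Finset.sum_le_sum fun i _ => ?_
            have := hTV 0 i.succ (Fin.succ_pos i)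
            calc ∑ d, |P i.succ d - P 0 d| = ∑ d, |P 0 d - P i.succ d| := by
                  refine Finset.sum_congr rfl fun d _ => abs_sub_comm _ _
              _ ≤ η := this
        _ = ((k : ℝ) + 1) * η := by
            rw [Finset.sum_const, Finset.card_univ, Fintype.card_fin]
            push_cast; ring
    have h1 : ∑ d, P 0 d ^ (k + 2) - ((k : ℝ) + 1) * η ≤ ∑ d, ∏ i, P i d := by
      have := Finset.sum_le_sum (fun d (_ : d ∈ Finset.univ) => hB d)
      rw [Finset.sum_sub_distrib] at this
      linarith
    -- (k+1) ≤ c^k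
    have hkc : ((k : ℝ) + 1) ≤ c ^ k := by
      calc ((k : ℝ) + 1) ≤ (2 : ℝ) ^ k := by
            have : k + 1 ≤ 2 ^ k := Nat.lt_two_pow_self (n := k)
            exact_mod_cast this
        _ ≤ c ^ k := by gcongr
    have hkη : ((k : ℝ) + 1) * η ≤ c ^ k * η := mul_le_mul_of_nonneg_right hkc hη0
    linarith
end

section
/- Let D be a finite set, m ≥ 2, and X_1,…,X_m random variables taking values in D. If cor(X_1,…,X_m) = (Σ_{d∈D} P(X_1=d)⋯P(X_m=d)) − 1/|D|^{m−1} ≥ −ν, then the overlap ω(X_1,…,X_m) = Σ_{d∈D} min(P(X_1=d),…,P(X_m=d)) satisfies ω(X_1,…,X_m) ≥ 1/|D|^m − ν/|D|. -/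
/-- If `cor(X_1,…,X_m) ≥ −ν`, then the overlap
`∑_d min_i P(X_i=d)` is at least `1/|D|^m − ν/|D|`. -/
theorem stmt_1 {D : Type*} [Fintype D] (m : ℕ) (hm : 2 ≤ m)
    (P : Fin m → D → ℝ) (hP0 : ∀ i d, 0 ≤ P i d)
    (hP1 : ∀ i, ∑ d, P i d = 1) (ν : ℝ)
    (hcor : (∑ d, ∏ i, P i d) - 1 / (Fintype.card D : ℝ) ^ (m - 1) ≥ -ν) :
    ∑ d, (Finset.univ.inf' ⟨⟨0, by omega⟩, Finset.mem_univ _⟩ fun i => P i d) ≥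
      1 / (Fintype.card D : ℝ) ^ m - ν / (Fintype.card D : ℝ) := by
  set c : ℝ := (Fintype.card D : ℝ) with hc
  have hPle1 : ∀ i d, P i d ≤ 1 := fun i d => by
    rw [← hP1 i]
    exact Finset.single_le_sum (fun d' _ => hP0 i d') (Finset.mem_univ d)
  have hkey : ∀ d, ∏ i, P i d ≤
      Finset.univ.inf' ⟨⟨0, by omega⟩, Finset.mem_univ _⟩ fun i => P i d := by
    intro d
    apply Finset.le_inf'
    intro i _
    calc ∏ j, P j d = P i d * ∏ j ∈ Finset.univ.erase i, P j d :=
          (Finset.mul_prod_erase Finset.univ (fun j => P j d) (Finset.mem_univ i)).symm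
      _ ≤ P i d * 1 := by
          apply mul_le_mul_of_nonneg_left _ (hP0 i d)
          exact Finset.prod_le_one (fun j _ => hP0 j d) (fun j _ => hPle1 j d)
      _ = P i d := mul_one _
  have hS1 : ∑ d, ∏ i, P i d ≤
      ∑ d, (Finset.univ.inf' ⟨⟨0, by omega⟩, Finset.mem_univ _⟩ fun i => P i d) :=
    Finset.sum_le_sum fun d _ => hkey d
  have hS0 : 0 ≤
      ∑ d, (Finset.univ.inf' ⟨⟨0, by omega⟩, Finset.mem_univ _⟩ fun i => P i d) :=
    Finset.sum_nonneg fun d _ => Finset.le_inf' _ _ (fun i _ => hP0 i d)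
  set S := ∑ d, (Finset.univ.inf' ⟨⟨0, by omega⟩, Finset.mem_univ _⟩ fun i => P i d)
  have hSlow : 1 / c ^ (m - 1) - ν ≤ S := by linarith [hcor, hS1]
  rcases eq_or_lt_of_le (Nat.cast_nonneg (Fintype.card D) : (0:ℝ) ≤ c) with h0 | hpos
  · -- c = 0
    have hcz : c = 0 := by rw [hc, ← h0]
    rw [hcz]
    have hm0 : (0:ℝ) ^ m = 0 := zero_pow (by omega)
    rw [hm0]
    simp
    linarith
  · have hcpos : 0 < c := by rw [hc]; exact hpos
    have hc1 : 1 ≤ c := by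
      rw [hc]
      have : 0 < Fintype.card D := by exact_mod_cast hpos
      exact_mod_cast this
    have hpow : c ^ m = c ^ (m - 1) * c := by
      rw [← pow_succ]
      congr 1
      omega
    have hcne : c ≠ 0 := ne_of_gt hcpos
    have hane : c ^ (m - 1) ≠ 0 := pow_ne_zero _ hcne
    have heq : 1 / c ^ m - ν / c = (1 / c ^ (m - 1) - ν) / c := by
      rw [hpow]
      field_simp
    rw [heq]
    rcases le_or_gt (1 / c ^ (m - 1) - ν) 0 with hA | hA
    · have : (1 / c ^ (m - 1) - ν) / c ≤ 0 :=
        div_nonpos_of_nonpos_of_nonneg hA (le_of_lt hcpos)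
      linarith
    · have : (1 / c ^ (m - 1) - ν) / c ≤ 1 / c ^ (m - 1) - ν := by
        rw [div_le_iff₀ hcpos]
        nlinarith
      linarith
end

section
/- Let p be a prime, k ≥ 1 an integer, and φ_1,…,φ_k : F_p^n → F_p be linear forms. Then for every (y_1,…,y_k) ∈ F_p^k, the probability, for x chosen uniformly at random from {0,1}^n ⊂ F_p^n, of the event φ_1(x)=y_1, …, φ_k(x)=y_k, is either 0 or at least 2^{−k(p−1)}. -/
open Finset MvPolynomial

lemma davenport (p : ℕ) (hp : p.Prime) (k m : ℕ) (hm : k * (p - 1) < m)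
    (v : Fin m → Fin k → ZMod p) :
    ∃ S : Finset (Fin m), S.Nonempty ∧ ∀ i, ∑ j ∈ S, v j i = 0 := by
  haveI := Fact.mk hp
  set f : Fin k → MvPolynomial (Fin m) (ZMod p) :=
    fun i => ∑ j, MvPolynomial.C (v j i) * (X j) ^ (p - 1) with hf
  have hdeg : ∀ i, (f i).totalDegree ≤ p - 1 := by
    intro i
    refine (totalDegree_finset_sum _ _).trans ?_
    apply Finset.sup_le
    intro j _
    refine (totalDegree_mul _ _).trans ?_
    simp [totalDegree_X_pow]
  have hsum : (∑ i, (f i).totalDegree) < Fintype.card (Fin m) := by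
    calc (∑ i, (f i).totalDegree) ≤ ∑ _i : Fin k, (p-1) := Finset.sum_le_sum fun i _ => hdeg i
    _ = k * (p-1) := by simp [mul_comm]
    _ < m := hm
    _ = Fintype.card (Fin m) := by simp
  have hdvd := char_dvd_card_solutions_of_fintype_sum_lt (K := ZMod p) p hsum
  have hcardpos : 0 < Fintype.card { x : Fin m → ZMod p // ∀ i, eval x (f i) = 0 } := by
    refine Fintype.card_pos_iff.mpr ⟨⟨0, ?_⟩⟩
    intro i
    have : p - 1 ≠ 0 := by have := hp.two_le; omega
    simp [hf, this]
  have h2 : 1 < Fintype.card { x : Fin m → ZMod p // ∀ i, eval x (f i) = 0 } := by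
    have hple := Nat.le_of_dvd hcardpos (by convert hdvd using 2 <;> exact Subsingleton.elim _ _)
    have := hp.two_le
    omega
  obtain ⟨x, hx⟩ := Fintype.exists_ne_of_one_lt_card h2 ⟨0, by
    intro i
    have : p - 1 ≠ 0 := by have := hp.two_le; omega
    simp [hf, this]⟩
  have hxne : x.1 ≠ 0 := by
    intro h
    apply hx
    exact Subtype.ext h
  obtain ⟨j0, hj0⟩ : ∃ j, x.1 j ≠ 0 := by
    by_contra h
    push_neg at h
    exact hxne (funext h)
  refine ⟨Finset.univ.filter (fun j => x.1 j ≠ 0), ⟨j0, by simp [hj0]⟩, ?_⟩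
  intro i
  have hev : ∑ j, v j i * (x.1 j) ^ (p - 1) = 0 := by
    have h := x.2 i
    simp only [hf, map_sum, eval_mul, eval_C, eval_pow, eval_X] at h
    exact h
  have hkey : ∑ j, v j i * (x.1 j) ^ (p - 1) = ∑ j ∈ Finset.univ.filter (fun j => x.1 j ≠ 0), v j i := by
    rw [Finset.sum_filter]
    apply Finset.sum_congr rfl
    intro j _
    by_cases hj : x.1 j = 0
    · have : p - 1 ≠ 0 := by have := hp.two_le; omega
      simp [hj, zero_pow this]
    · rw [ZMod.pow_card_sub_one_eq_one hj]
      simp [hj]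
  exact hkey.symm.trans hev


variable {ι G : Type*} [DecidableEq ι] [AddCommGroup G] [DecidableEq G]

lemma second_solution (d : ℕ)
    (hd : ∀ (m : ℕ) (w : Fin m → G), d < m → ∃ S : Finset (Fin m), S.Nonempty ∧ ∑ j ∈ S, w j = 0)
    (A : Finset ι) (hA : d < A.card) (v : ι → G) (y : G) (T : Finset ι) (hT : T ⊆ A)
    (hTs : ∑ j ∈ T, v j = y) :
    ∃ T' : Finset ι, T' ⊆ A ∧ ∑ j ∈ T', v j = y ∧ T' ≠ T := by
  classical
  let e := A.equivFin
  set w : Fin A.card → G := fun j => if ((e.symm j : ι) ∈ T) then -v (e.symm j : ι) else v (e.symm j : ι) with hw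
  obtain ⟨S₀, hS₀ne, hS₀⟩ := hd A.card w hA
  set S : Finset ι := S₀.image (fun j => ((e.symm j : ι))) with hS
  have hSA : S ⊆ A := by
    intro a ha
    rw [hS] at ha
    obtain ⟨j, _, rfl⟩ := Finset.mem_image.mp ha
    exact (e.symm j).2
  have hSne : S.Nonempty := hS₀ne.image _
  have hinj : Set.InjOn (fun j => ((e.symm j : ι))) S₀ := fun a _ b _ h =>
    e.symm.injective (Subtype.ext h)
  have hSsum : ∑ a ∈ S, (if a ∈ T then -v a else v a) = 0 := by
    rw [hS, Finset.sum_image fun a ha b hb h => hinj ha hb h]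
    exact hS₀
  -- split the zero-sum
  have hsplit : ∑ a ∈ S \ T, v a = ∑ a ∈ S ∩ T, v a := by
    have := hSsum
    rw [← Finset.sum_filter_add_sum_filter_not S (fun a => a ∈ T)] at this
    have h1 : S.filter (fun a => a ∈ T) = S ∩ T := by ext a; simp [Finset.mem_inter]
    have h2 : S.filter (fun a => a ∉ T) = S \ T := by ext a; simp [Finset.mem_sdiff]
    rw [h1, h2] at this
    have h3 : ∑ a ∈ S ∩ T, (if a ∈ T then -v a else v a) = -∑ a ∈ S ∩ T, v a := by
      rw [← Finset.sum_neg_distrib]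
      apply Finset.sum_congr rfl
      intro a ha
      simp [(Finset.mem_inter.mp ha).2]
    have h4 : ∑ a ∈ S \ T, (if a ∈ T then -v a else v a) = ∑ a ∈ S \ T, v a := by
      apply Finset.sum_congr rfl
      intro a ha
      simp [(Finset.mem_sdiff.mp ha).2]
    rw [h3, h4] at this
    linear_combination (norm := abel) this
  refine ⟨symmDiff T S, ?_, ?_, ?_⟩
  · intro a ha
    rcases Finset.mem_symmDiff.mp ha with ⟨h1, _⟩ | ⟨h1, _⟩
    · exact hT h1
    · exact hSA h1
  · have hdisj : Disjoint (T \ S) (S \ T) := disjoint_sdiff_sdiff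
    have : symmDiff T S = (T \ S) ∪ (S \ T) := rfl
    rw [this, Finset.sum_union hdisj]
    have hTS : ∑ a ∈ T \ S, v a = ∑ a ∈ T, v a - ∑ a ∈ T ∩ S, v a := by
      rw [← Finset.sdiff_inter_self_left]
      exact Finset.sum_sdiff_eq_sub (Finset.inter_subset_left)
    rw [hTS, hTs, Finset.inter_comm, ← hsplit]
    abel
  · intro h
    have : S = ⊥ := by
      have := symmDiff_eq_left.mp h
      exact this
    rcases hSne with ⟨a, ha⟩
    rw [this] at ha
    exact absurd ha (Finset.notMem_empty a)

lemma key_count (d : ℕ)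
    (hd : ∀ (m : ℕ) (w : Fin m → G), d < m → ∃ S : Finset (Fin m), S.Nonempty ∧ ∑ j ∈ S, w j = 0)
    (n : ℕ) :
    ∀ (A : Finset ι), A.card ≤ n → ∀ (v : ι → G) (y : G),
      (A.powerset.filter fun S => ∑ j ∈ S, v j = y).card = 0 ∨
      2 ^ A.card ≤ 2 ^ d * (A.powerset.filter fun S => ∑ j ∈ S, v j = y).card := by
  classical
  induction n with
  | zero =>
    intro A hA v y
    by_cases h : (A.powerset.filter fun S => ∑ j ∈ S, v j = y).card = 0
    · exact Or.inl h
    · right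
      have hA0 : A.card = 0 := Nat.le_zero.mp hA
      have h1 : 1 ≤ (A.powerset.filter fun S => ∑ j ∈ S, v j = y).card := Nat.one_le_iff_ne_zero.mpr h
      calc 2 ^ A.card = 1 := by rw [hA0]; rfl
      _ ≤ 2 ^ d * 1 := by rw [mul_one]; exact Nat.one_le_two_pow
      _ ≤ _ := by exact Nat.mul_le_mul_left _ h1
  | succ n ih =>
    intro A hA v y
    by_cases h : (A.powerset.filter fun S => ∑ j ∈ S, v j = y).card = 0
    · exact Or.inl h
    right
    obtain ⟨T, hTmem⟩ := Finset.card_pos.mp (Nat.pos_of_ne_zero h)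
    rw [Finset.mem_filter, Finset.mem_powerset] at hTmem
    obtain ⟨hTA, hTsum⟩ := hTmem
    by_cases hsmall : A.card ≤ d
    · have h1 : 1 ≤ (A.powerset.filter fun S => ∑ j ∈ S, v j = y).card := Nat.one_le_iff_ne_zero.mpr h
      calc 2 ^ A.card ≤ 2 ^ d * 1 := by
            rw [mul_one]; exact Nat.pow_le_pow_right (by norm_num) hsmall
      _ ≤ _ := Nat.mul_le_mul_left _ h1
    push_neg at hsmall
    obtain ⟨T', hT'A, hT'sum, hT'ne⟩ := second_solution d hd A hsmall v y T hTA hTsum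
    -- find a coordinate where T and T' differ
    have hdiff : (symmDiff T T').Nonempty := by
      rw [Finset.nonempty_iff_ne_empty]
      intro hempty
      exact hT'ne (symmDiff_eq_bot.mp hempty).symm
    obtain ⟨j, hj⟩ := hdiff
    have hjA : j ∈ A := by
      rcases Finset.mem_symmDiff.mp hj with ⟨h1, _⟩ | ⟨h1, _⟩
      · exact hTA h1
      · exact hT'A h1
    -- get Tin containing j and Tout not containing j, both solutions
    obtain ⟨Tin, Tout, hTinA, hToutA, hTinS, hToutS, hjin, hjout⟩ :
        ∃ Tin Tout : Finset ι, Tin ⊆ A ∧ Tout ⊆ A ∧ (∑ a ∈ Tin, v a = y) ∧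
          (∑ a ∈ Tout, v a = y) ∧ j ∈ Tin ∧ j ∉ Tout := by
      rcases Finset.mem_symmDiff.mp hj with ⟨h1, h2⟩ | ⟨h1, h2⟩
      · exact ⟨T, T', hTA, hT'A, hTsum, hT'sum, h1, h2⟩
      · exact ⟨T', T, hT'A, hTA, hT'sum, hTsum, h1, h2⟩
    set A' := A.erase j with hA'
    have hA'card : A'.card = A.card - 1 := Finset.card_erase_of_mem hjA
    have hA'le : A'.card ≤ n := by
      have := Finset.card_erase_of_mem hjA
      omega
    -- two subproblems
    set N₁ := (A'.powerset.filter fun S => ∑ a ∈ S, v a = y - v j).card with hN₁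
    set N₂ := (A'.powerset.filter fun S => ∑ a ∈ S, v a = y).card with hN₂
    have hN₁pos : N₁ ≠ 0 := by
      rw [hN₁]
      have : Tin.erase j ∈ A'.powerset.filter fun S => ∑ a ∈ S, v a = y - v j := by
        rw [Finset.mem_filter, Finset.mem_powerset]
        constructor
        · exact Finset.erase_subset_erase j hTinA
        · have := Finset.add_sum_erase _ v hjin
          rw [eq_sub_iff_add_eq]
          rw [← hTinS]
          rw [← this]
          rw [add_comm]
      intro hzero
      rw [Finset.card_eq_zero] at hzero
      rw [hzero] at this
      exact absurd this (Finset.notMem_empty _)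
    have hN₂pos : N₂ ≠ 0 := by
      rw [hN₂]
      have : Tout ∈ A'.powerset.filter fun S => ∑ a ∈ S, v a = y := by
        rw [Finset.mem_filter, Finset.mem_powerset]
        exact ⟨fun a ha => Finset.mem_erase.mpr ⟨fun he => hjout (he ▸ ha), hToutA ha⟩, hToutS⟩
      intro hzero
      rw [Finset.card_eq_zero] at hzero
      rw [hzero] at this
      exact absurd this (Finset.notMem_empty _)
    have ih₁ := (ih A' hA'le v (y - v j)).resolve_left hN₁pos
    have ih₂ := (ih A' hA'le v y).resolve_left hN₂pos
    -- combine: N ≥ N₁ + N₂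
    have hcomb : N₁ + N₂ ≤ (A.powerset.filter fun S => ∑ a ∈ S, v a = y).card := by
      have himg : ((A'.powerset.filter fun S => ∑ a ∈ S, v a = y - v j).image (insert j)).card = N₁ := by
        rw [hN₁]
        apply Finset.card_image_of_injOn
        intro S₁ hS₁ S₂ hS₂ hins
        have hj₁ : j ∉ S₁ := fun hc => (Finset.mem_erase.mp ((Finset.mem_powerset.mp (Finset.mem_filter.mp hS₁).1) hc)).1 rfl
        have hj₂ : j ∉ S₂ := fun hc => (Finset.mem_erase.mp ((Finset.mem_powerset.mp (Finset.mem_filter.mp hS₂).1) hc)).1 rfl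
        have : (insert j S₁).erase j = (insert j S₂).erase j := by rw [hins]
        rwa [Finset.erase_insert hj₁, Finset.erase_insert hj₂] at this
      have hsub1 : (A'.powerset.filter fun S => ∑ a ∈ S, v a = y - v j).image (insert j) ⊆
          A.powerset.filter fun S => ∑ a ∈ S, v a = y := by
        intro S hS
        obtain ⟨S₀, hS₀, rfl⟩ := Finset.mem_image.mp hS
        rw [Finset.mem_filter, Finset.mem_powerset] at hS₀ ⊢
        obtain ⟨hS₀A, hS₀sum⟩ := hS₀
        have hjS₀ : j ∉ S₀ := fun hc => (Finset.mem_erase.mp (hS₀A hc)).1 rfl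
        constructor
        · intro a ha
          rcases Finset.mem_insert.mp ha with rfl | ha'
          · exact hjA
          · exact Finset.erase_subset _ _ (hS₀A ha')
        · rw [Finset.sum_insert hjS₀, hS₀sum]
          abel
      have hsub2 : (A'.powerset.filter fun S => ∑ a ∈ S, v a = y) ⊆
          A.powerset.filter fun S => ∑ a ∈ S, v a = y := by
        intro S hS
        rw [Finset.mem_filter, Finset.mem_powerset] at hS ⊢
        exact ⟨hS.1.trans (Finset.erase_subset _ _), hS.2⟩
      have hdisj : Disjoint ((A'.powerset.filter fun S => ∑ a ∈ S, v a = y - v j).image (insert j))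
          (A'.powerset.filter fun S => ∑ a ∈ S, v a = y) := by
        rw [Finset.disjoint_left]
        intro S hS1 hS2
        obtain ⟨S₀, _, rfl⟩ := Finset.mem_image.mp hS1
        have : insert j S₀ ⊆ A' := Finset.mem_powerset.mp (Finset.mem_filter.mp hS2).1
        exact (Finset.mem_erase.mp (this (Finset.mem_insert_self j S₀))).1 rfl
      calc N₁ + N₂ = (((A'.powerset.filter fun S => ∑ a ∈ S, v a = y - v j).image (insert j)) ∪
            (A'.powerset.filter fun S => ∑ a ∈ S, v a = y)).card := by
            rw [Finset.card_union_of_disjoint hdisj, himg, hN₂]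
      _ ≤ _ := Finset.card_le_card (Finset.union_subset hsub1 hsub2)
    calc 2 ^ A.card = 2 ^ A'.card + 2 ^ A'.card := by
          rw [hA'card]
          have : 1 ≤ A.card := by omega
          rw [← two_mul, ← pow_succ']
          congr 1
          omega
    _ ≤ 2 ^ d * N₁ + 2 ^ d * N₂ := Nat.add_le_add ih₁ ih₂
    _ = 2 ^ d * (N₁ + N₂) := by ring
    _ ≤ 2 ^ d * _ := Nat.mul_le_mul_left _ hcomb


/-- For linear forms `φ_1,…,φ_k : F_p^n → F_p` and any target values, the
probability over uniform `x ∈ {0,1}^n` of `φ_1(x)=y_1, …, φ_k(x)=y_k` is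
either `0` or at least `2^{−k(p−1)}`. -/
theorem stmt_4 (p : ℕ) (hp : p.Prime) (n k : ℕ) (hk : 1 ≤ k)
    (φ : Fin k → (Fin n → ZMod p) →ₗ[ZMod p] ZMod p) (y : Fin k → ZMod p) :
    ((Finset.univ.filter fun x : Fin n → Fin 2 =>
        ∀ i, φ i (fun z => ((x z : ℕ) : ZMod p)) = y i).card : ℝ) / 2 ^ n = 0 ∨
    ((Finset.univ.filter fun x : Fin n → Fin 2 =>
        ∀ i, φ i (fun z => ((x z : ℕ) : ZMod p)) = y i).card : ℝ) / 2 ^ n ≥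
      1 / 2 ^ (k * (p - 1)) := by
  classical
  set d := k * (p - 1) with hd_def
  have hd : ∀ (m : ℕ) (w : Fin m → (Fin k → ZMod p)), d < m →
      ∃ S : Finset (Fin m), S.Nonempty ∧ ∑ j ∈ S, w j = 0 := by
    intro m w hm
    obtain ⟨S, hne, hsum⟩ := davenport p hp k m hm w
    exact ⟨S, hne, by funext i; rw [Finset.sum_apply]; exact hsum i⟩
  set v : Fin n → (Fin k → ZMod p) :=
    fun j i => φ i (fun z => if j = z then 1 else 0) with hv
  have hcond : ∀ x : Fin n → Fin 2,
      ((∀ i, φ i (fun z => ((x z : ℕ) : ZMod p)) = y i) ↔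
        ∑ j ∈ Finset.univ.filter (fun z => x z = 1), v j = y) := by
    intro x
    have hφ : ∀ i, φ i (fun z => ((x z : ℕ) : ZMod p)) =
        ∑ j ∈ Finset.univ.filter (fun z => x z = 1), v j i := by
      intro i
      rw [LinearMap.pi_apply_eq_sum_univ (φ i), Finset.sum_filter]
      apply Finset.sum_congr rfl
      intro z _
      by_cases hz : x z = 1
      · simp [hz, hv]
      · have h0 : x z = 0 := by
          have h1 : (x z : ℕ) < 2 := (x z).isLt
          have h2 : (x z : ℕ) ≠ 1 := fun h => hz (Fin.ext h)
          exact Fin.ext (by simpa using by omega)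
        simp [h0, hz]
    constructor
    · intro hx
      funext i
      rw [Finset.sum_apply, ← hφ i]
      exact hx i
    · intro hx i
      rw [hφ i, ← Finset.sum_apply, hx]
  have hcard : (Finset.univ.filter fun x : Fin n → Fin 2 =>
        ∀ i, φ i (fun z => ((x z : ℕ) : ZMod p)) = y i).card
      = ((Finset.univ : Finset (Fin n)).powerset.filter
          fun S => ∑ j ∈ S, v j = y).card := by
    refine Finset.card_bij' (fun x _ => Finset.univ.filter fun z => x z = 1)
      (fun S _ => fun z => if z ∈ S then 1 else 0) ?hi ?hj ?li ?ri
    case hi =>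
      intro x hx
      rw [Finset.mem_filter] at hx ⊢
      exact ⟨Finset.mem_powerset.mpr (Finset.subset_univ _), (hcond x).mp hx.2⟩
    case hj =>
      intro S hS
      rw [Finset.mem_filter] at hS ⊢
      refine ⟨Finset.mem_univ _, ?_⟩
      rw [hcond]
      have hfe : (Finset.univ.filter fun z => (if z ∈ S then (1 : Fin 2) else 0) = 1) = S := by
        ext z
        by_cases h : z ∈ S <;> simp [h]
      rw [hfe]
      exact hS.2
    case li =>
      intro x _
      funext z
      by_cases h : x z = 1
      · simp [h]
      · have h0 : x z = 0 := by
          have h1 : (x z : ℕ) < 2 := (x z).isLt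
          have h2 : (x z : ℕ) ≠ 1 := fun hh => h (Fin.ext hh)
          exact Fin.ext (by simpa using by omega)
        simp [h, h0]
    case ri =>
      intro S _
      ext z
      by_cases h : z ∈ S <;> simp [h]
  rcases key_count d hd n (Finset.univ : Finset (Fin n)) (by simp) v y with h0 | hge
  · left
    rw [hcard, h0]
    simp
  · right
    rw [Finset.card_univ, Fintype.card_fin] at hge
    rw [ge_iff_le, div_le_div_iff₀ (by positivity) (by positivity), hcard, one_mul]
    have hR : (2 : ℝ) ^ n ≤ 2 ^ d *
        (((Finset.univ : Finset (Fin n)).powerset.filter fun S => ∑ j ∈ S, v j = y).card : ℝ) := by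
      exact_mod_cast hge
    calc (2 : ℝ) ^ n ≤ _ := hR
    _ = _ := by rw [mul_comm]
end

section
/- Let p be a prime and n a positive integer. Let φ : F_p^n → F_p be a linear form whose support {z ∈ [n] : a_z ≠ 0} has size at least r. Then |E_{x ∈ {0,1}^n} ω_p^{φ(x)}| ≤ (1 − p^{−2})^{r/2}, where ω_p = e^{2πi/p}; in particular |P_{x ∈ {0,1}^n}[φ(x) = y] − 1/p| ≤ (1−p^{−2})^r for every y ∈ F_p. -/
open Complex Finset Real


noncomputable def stmt5E (p : ℕ) (b : ZMod p) : ℂ :=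
  Complex.exp (2 * Real.pi * I * ((b.val : ℕ) : ℝ) / p)

lemma stmt5E_eq_pow (p : ℕ) (b : ZMod p) :
    stmt5E p b = Complex.exp (2 * Real.pi * I / p) ^ b.val := by
  rw [stmt5E, ← Complex.exp_nat_mul]
  congr 1
  push_cast
  ring

lemma stmt5E_eq_mul_I (p : ℕ) (b : ZMod p) :
    stmt5E p b = Complex.exp (((2 * Real.pi * b.val / p : ℝ) : ℂ) * I) := by
  rw [stmt5E]
  congr 1
  push_cast
  ring

lemma stmt5_omega_pow (p : ℕ) (hp : p ≠ 0) :
    Complex.exp (2 * Real.pi * I / p) ^ p = 1 :=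
  (Complex.isPrimitiveRoot_exp p hp).pow_eq_one

lemma stmt5_pow_mod (p : ℕ) (hp : p ≠ 0) (m : ℕ) :
    Complex.exp (2 * Real.pi * I / p) ^ (m % p) =
      Complex.exp (2 * Real.pi * I / p) ^ m := by
  conv_rhs => rw [← Nat.div_add_mod m p]
  rw [pow_add, pow_mul, stmt5_omega_pow p hp, one_pow, one_mul]

lemma stmt5E_zero (p : ℕ) [NeZero p] : stmt5E p 0 = 1 := by
  rw [stmt5E_eq_pow, ZMod.val_zero, pow_zero]

lemma stmt5E_add (p : ℕ) [NeZero p] (u v : ZMod p) :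
    stmt5E p (u + v) = stmt5E p u * stmt5E p v := by
  rw [stmt5E_eq_pow, stmt5E_eq_pow, stmt5E_eq_pow, ← pow_add, ZMod.val_add,
    stmt5_pow_mod p (NeZero.ne p)]

lemma stmt5E_sum (p : ℕ) [NeZero p] {ι : Type*} (s : Finset ι) (f : ι → ZMod p) :
    stmt5E p (∑ z ∈ s, f z) = ∏ z ∈ s, stmt5E p (f z) := by
  induction s using Finset.cons_induction with
  | empty => simp [stmt5E_zero]
  | cons i s hi ih => rw [Finset.sum_cons, Finset.prod_cons, stmt5E_add, ih]

lemma stmt5E_norm (p : ℕ) (b : ZMod p) : ‖stmt5E p b‖ = 1 := by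
  rw [stmt5E_eq_mul_I]
  exact Complex.norm_exp_ofReal_mul_I _


lemma stmt5_sin_half (p v : ℕ) (hp0 : 0 < p) (h1 : 1 ≤ v) (h2 : 2 * v ≤ p) :
    2 / (p : ℝ) ≤ Real.sin (π * v / p) := by
  have hpR : (0:ℝ) < p := by exact_mod_cast hp0
  have hvR : (1:ℝ) ≤ v := by exact_mod_cast h1
  have h2R : 2 * (v:ℝ) ≤ p := by exact_mod_cast h2
  have hx0 : 0 ≤ π * v / p := by positivity
  have hx : π * v / p ≤ π / 2 := by
    rw [div_le_div_iff₀ hpR two_pos]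
    nlinarith [pi_pos]
  have hkey := Real.mul_le_sin hx0 hx
  have heq : 2 / π * (π * v / p) = 2 * v / p := by
    field_simp
  rw [heq] at hkey
  refine le_trans ?_ hkey
  rw [div_le_div_iff₀ hpR hpR]
  nlinarith

lemma stmt5_sin (p v : ℕ) (hp0 : 0 < p) (h1 : 1 ≤ v) (h2 : v < p) :
    2 / (p : ℝ) ≤ Real.sin (π * v / p) := by
  rcases le_or_gt (2 * v) p with h | h
  · exact stmt5_sin_half p v hp0 h1 h
  · have hw1 : 1 ≤ p - v := by omega
    have hw2 : 2 * (p - v) ≤ p := by omega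
    have hwR : ((p - v : ℕ) : ℝ) = (p : ℝ) - v := by
      push_cast [Nat.cast_sub h2.le]; ring
    have hpR : (0:ℝ) < p := by exact_mod_cast hp0
    have heq : π * v / p = π - π * ((p - v : ℕ) : ℝ) / p := by
      rw [hwR]; field_simp; ring
    rw [heq, Real.sin_pi_sub]
    exact stmt5_sin_half p (p - v) hp0 hw1 hw2

lemma stmt5_factor (p : ℕ) (hp : p.Prime) (b : ZMod p) (hb : b ≠ 0) :
    ‖(1 + stmt5E p b) / 2‖ ≤ Real.sqrt (1 - (2 / (p : ℝ)) ^ 2) := by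
  haveI : NeZero p := ⟨hp.ne_zero⟩
  have hpR : (0:ℝ) < p := by exact_mod_cast hp.pos
  set v : ℕ := b.val with hv
  have hv1 : 1 ≤ v := Nat.one_le_iff_ne_zero.mpr (fun h => hb (ZMod.val_eq_zero b |>.mp h))
  have hv2 : v < p := ZMod.val_lt b
  have hθ : ∃ θ : ℝ, θ = 2 * π * v / p := ⟨_, rfl⟩
  obtain ⟨θ, hθ⟩ := hθ
  have hrepr : (1 + stmt5E p b) / 2 =
      Complex.ofReal ((1 + Real.cos θ) / 2) + Complex.ofReal (Real.sin θ / 2) * I := by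
    rw [stmt5E_eq_mul_I, Complex.exp_mul_I, ← Complex.ofReal_cos, ← Complex.ofReal_sin, hθ]
    push_cast
    ring
  rw [hrepr, Complex.norm_def, Complex.normSq_add_mul_I]
  apply Real.sqrt_le_sqrt
  have hsin : 2 / (p:ℝ) ≤ Real.sin (θ / 2) := by
    have : θ / 2 = π * v / p := by rw [hθ]; ring
    rw [this]
    exact stmt5_sin p v hp.pos hv1 hv2
  have hsq : (2 / (p:ℝ)) ^ 2 ≤ Real.sin (θ / 2) ^ 2 := by
    have h0 : (0:ℝ) ≤ 2 / p := by positivity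
    nlinarith
  have h1 := Real.sin_sq_add_cos_sq θ
  have h2 := Real.cos_sq (θ / 2)
  rw [show 2 * (θ / 2) = θ by ring] at h2
  have h3 := Real.sin_sq_add_cos_sq (θ / 2)
  nlinarith

lemma stmt5_main (p n : ℕ) (hp : p.Prime) (r : ℕ) (a : Fin n → ZMod p)
    (hsupp : r ≤ (Finset.univ.filter fun z : Fin n => a z ≠ 0).card) :
    ‖(∑ x : Fin n → Fin 2, stmt5E p (∑ z, a z * ((x z : ℕ) : ZMod p))) / 2 ^ n‖ ≤
      Real.sqrt (1 - (2 / (p : ℝ)) ^ 2) ^ r := by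
  haveI : NeZero p := ⟨hp.ne_zero⟩
  have hfac : (∑ x : Fin n → Fin 2, stmt5E p (∑ z, a z * ((x z : ℕ) : ZMod p))) / 2 ^ n =
      ∏ z : Fin n, ((1 + stmt5E p (a z)) / 2) := by
    have h1 : ∀ x : Fin n → Fin 2, stmt5E p (∑ z, a z * ((x z : ℕ) : ZMod p)) =
        ∏ z, stmt5E p (a z * ((x z : ℕ) : ZMod p)) := fun x => stmt5E_sum p _ _
    simp_rw [h1]
    rw [← Fintype.prod_sum (f := fun z (j : Fin 2) => stmt5E p (a z * ((j : ℕ) : ZMod p)))]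
    rw [Finset.prod_div_distrib]
    congr 1
    · apply Finset.prod_congr rfl
      intro z _
      rw [Fin.sum_univ_two]
      norm_num [stmt5E_zero]
    · simp [Finset.prod_const]
  rw [hfac]
  set c := Real.sqrt (1 - (2 / (p : ℝ)) ^ 2) with hc
  have hc0 : 0 ≤ c := Real.sqrt_nonneg _
  have hc1 : c ≤ 1 := by
    rw [hc]
    have h0 : (0:ℝ) ≤ (2 / (p : ℝ)) ^ 2 := by positivity
    have := Real.sqrt_le_sqrt (show 1 - (2 / (p : ℝ)) ^ 2 ≤ 1 by linarith)
    rwa [Real.sqrt_one] at this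
  have hle1 : ∀ z : Fin n, ‖(1 + stmt5E p (a z)) / 2‖ ≤ 1 := by
    intro z
    rw [norm_div]
    calc ‖1 + stmt5E p (a z)‖ / ‖(2:ℂ)‖ ≤ (‖(1:ℂ)‖ + ‖stmt5E p (a z)‖) / ‖(2:ℂ)‖ := by
          gcongr
          exact norm_add_le _ _
      _ = 1 := by simp [stmt5E_norm]
  rw [norm_prod]
  set s := Finset.univ.filter fun z : Fin n => a z ≠ 0 with hs
  calc ∏ z : Fin n, ‖(1 + stmt5E p (a z)) / 2‖
      = (∏ z ∈ s, ‖(1 + stmt5E p (a z)) / 2‖) * ∏ z ∈ sᶜ, ‖(1 + stmt5E p (a z)) / 2‖ :=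
        (Finset.prod_mul_prod_compl s _).symm
    _ ≤ c ^ s.card * 1 := by
        apply mul_le_mul
        · rw [← Finset.prod_const]
          apply Finset.prod_le_prod (fun z _ => norm_nonneg _)
          intro z hz
          exact stmt5_factor p hp (a z) (by simpa [hs] using hz)
        · exact Finset.prod_le_one (fun z _ => norm_nonneg _) (fun z _ => hle1 z)
        · exact Finset.prod_nonneg (fun z _ => norm_nonneg _)
        · positivity
    _ = c ^ s.card := mul_one _
    _ ≤ c ^ r := pow_le_pow_of_le_one hc0 hc1 hsupp

lemma stmt5_orth (p : ℕ) [NeZero p] (hp : p.Prime) (u : ZMod p) :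
    ∑ t : ZMod p, stmt5E p (t * u) = if u = 0 then (p : ℂ) else 0 := by
  haveI : Fact p.Prime := ⟨hp⟩
  by_cases hu : u = 0
  · simp [hu, stmt5E_zero, ZMod.card]
  · rw [if_neg hu]
    have hbij := Equiv.sum_comp (Equiv.mulRight₀ u hu) (fun s => stmt5E p s)
    simp only [Equiv.mulRight₀_apply] at hbij
    rw [show (∑ t : ZMod p, stmt5E p (t * u)) = ∑ s : ZMod p, stmt5E p s from hbij]
    have hval : ∑ s : ZMod p, stmt5E p s =
        ∑ i ∈ Finset.range p, Complex.exp (2 * Real.pi * I / p) ^ i := by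
      simp_rw [stmt5E_eq_pow]
      refine Finset.sum_nbij' (fun s => s.val) (fun i => (i : ZMod p)) ?_ ?_ ?_ ?_ ?_
      · intro s _; exact Finset.mem_range.mpr (ZMod.val_lt s)
      · intro i _; exact Finset.mem_univ _
      · intro s _; exact ZMod.natCast_rightInverse s
      · intro i hi; exact ZMod.val_cast_of_lt (Finset.mem_range.mp hi)
      · intro s _; rfl
    rw [hval, (Complex.isPrimitiveRoot_exp p hp.ne_zero).geom_sum_eq_zero hp.one_lt]

open Complex in
/-- If a mod-`p` linear form `φ(x) = ∑ a_z x_z` has support of size at least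
`r`, then `|E_{x ∈ {0,1}^n} ω_p^{φ(x)}| ≤ (1 − p^{−2})^{r/2}`, and consequently
`|P[φ(x) = y] − 1/p| ≤ (1 − p^{−2})^r` for every `y ∈ F_p`. -/
theorem stmt_5 (p : ℕ) (hp : p.Prime) (n : ℕ) (hn : 1 ≤ n) (r : ℕ)
    (a : Fin n → ZMod p)
    (hsupp : r ≤ (Finset.univ.filter fun z : Fin n => a z ≠ 0).card) :
    ‖(∑ x : Fin n → Fin 2,
        Complex.exp (2 * Real.pi * I *
          ((∑ z, a z * ((x z : ℕ) : ZMod p)).val : ℝ) / p)) / 2 ^ n‖ ≤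
      (1 - ((p : ℝ)⁻¹) ^ 2) ^ ((r : ℝ) / 2) ∧
    ∀ y : ZMod p,
      |((Finset.univ.filter fun x : Fin n → Fin 2 =>
          ∑ z, a z * ((x z : ℕ) : ZMod p) = y).card : ℝ) / 2 ^ n - 1 / p| ≤
        (1 - ((p : ℝ)⁻¹) ^ 2) ^ (r : ℕ) := by
  haveI : Fact p.Prime := ⟨hp⟩
  haveI : NeZero p := ⟨hp.ne_zero⟩
  have hpR : (0:ℝ) < p := by exact_mod_cast hp.pos
  have hp1R : (1:ℝ) ≤ p := by exact_mod_cast hp.one_lt.le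
  set c := Real.sqrt (1 - (2 / (p : ℝ)) ^ 2) with hc
  have hc0 : 0 ≤ c := Real.sqrt_nonneg _
  have hq0 : (0:ℝ) ≤ ((p : ℝ)⁻¹) ^ 2 := by positivity
  have hq1 : ((p : ℝ)⁻¹) ^ 2 ≤ 1 := by
    have : (p:ℝ)⁻¹ ≤ 1 := by
      rw [inv_le_one_iff₀]; right; exact hp1R
    have h0 : (0:ℝ) ≤ (p:ℝ)⁻¹ := by positivity
    nlinarith
  have hx0 : (0:ℝ) ≤ 1 - ((p : ℝ)⁻¹) ^ 2 := by linarith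
  have h4 : (2 / (p:ℝ)) ^ 2 = 4 * ((p:ℝ)⁻¹) ^ 2 := by
    rw [div_pow, inv_pow, div_eq_mul_inv]; norm_num
  have hmain := stmt5_main p n hp r a hsupp
  constructor
  · -- Part 1
    have hcle : c ≤ Real.sqrt (1 - ((p : ℝ)⁻¹) ^ 2) := by
      apply Real.sqrt_le_sqrt; rw [h4]; linarith
    calc ‖(∑ x : Fin n → Fin 2,
          Complex.exp (2 * Real.pi * I *
            ((∑ z, a z * ((x z : ℕ) : ZMod p)).val : ℝ) / p)) / 2 ^ n‖
        = ‖(∑ x : Fin n → Fin 2, stmt5E p (∑ z, a z * ((x z : ℕ) : ZMod p))) / 2 ^ n‖ := rfl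
      _ ≤ c ^ r := hmain
      _ ≤ Real.sqrt (1 - ((p : ℝ)⁻¹) ^ 2) ^ r := pow_le_pow_left₀ hc0 hcle r
      _ = (1 - ((p : ℝ)⁻¹) ^ 2) ^ ((r : ℝ) / 2) := by
          rw [Real.sqrt_eq_rpow, ← Real.rpow_natCast ((1 - ((p:ℝ)⁻¹) ^ 2) ^ ((1:ℝ)/2)) r,
            ← Real.rpow_mul hx0]
          congr 1
          ring
  · -- Part 2
    intro y
    have hcle : c ≤ 1 - ((p : ℝ)⁻¹) ^ 2 := by
      have h1 : 1 - (2/(p:ℝ))^2 ≤ (1 - ((p:ℝ)⁻¹) ^ 2) ^ 2 := by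
        rw [h4]; nlinarith [sq_nonneg (((p:ℝ)⁻¹) ^ 2)]
      calc c ≤ Real.sqrt ((1 - ((p:ℝ)⁻¹) ^ 2) ^ 2) := Real.sqrt_le_sqrt h1
        _ = 1 - ((p:ℝ)⁻¹) ^ 2 := Real.sqrt_sq hx0
    set φ : (Fin n → Fin 2) → ZMod p := fun x => ∑ z, a z * ((x z : ℕ) : ZMod p) with hφ
    set N := (Finset.univ.filter fun x : Fin n → Fin 2 => φ x = y).card with hN
    have hSt : ∀ t : ZMod p, t ≠ 0 →
        ‖∑ x : Fin n → Fin 2, stmt5E p (t * φ x)‖ ≤ c ^ r * 2 ^ n := by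
      intro t ht
      have heq : ∀ x : Fin n → Fin 2, t * φ x = ∑ z, (t * a z) * ((x z : ℕ) : ZMod p) := by
        intro x
        rw [hφ, Finset.mul_sum]
        exact Finset.sum_congr rfl fun z _ => (mul_assoc _ _ _).symm
      have hcard : r ≤ (Finset.univ.filter fun z : Fin n => t * a z ≠ 0).card := by
        refine hsupp.trans (le_of_eq ?_)
        congr 1
        apply Finset.filter_congr
        intro z _
        simp [mul_eq_zero, ht]
      have hb := stmt5_main p n hp r (fun z => t * a z) hcard
      simp_rw [← heq] at hb
      rw [norm_div, norm_pow, Complex.norm_ofNat, div_le_iff₀ (by positivity)] at hb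
      exact hb
    have hkey : (N : ℂ) * p = ∑ t : ZMod p, stmt5E p (-(t*y)) * ∑ x : Fin n → Fin 2, stmt5E p (t * φ x) := by
      have hswap : ∑ t : ZMod p, stmt5E p (-(t*y)) * ∑ x : Fin n → Fin 2, stmt5E p (t * φ x)
          = ∑ x : Fin n → Fin 2, ∑ t : ZMod p, stmt5E p (t * (φ x - y)) := by
        simp_rw [Finset.mul_sum]
        rw [Finset.sum_comm]
        apply Finset.sum_congr rfl
        intro x _
        apply Finset.sum_congr rfl
        intro t _
        rw [show t * (φ x - y) = t * φ x + -(t * y) by ring, stmt5E_add, mul_comm]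
      rw [hswap]
      have : ∀ x : Fin n → Fin 2, ∑ t : ZMod p, stmt5E p (t * (φ x - y)) =
          if φ x = y then (p : ℂ) else 0 := by
        intro x
        rw [stmt5_orth p hp (φ x - y)]
        simp [sub_eq_zero]
      simp_rw [this]
      rw [← Finset.sum_filter, Finset.sum_const, nsmul_eq_mul, hN]
    have ht0 : stmt5E p (-((0:ZMod p)*y)) * ∑ x : Fin n → Fin 2, stmt5E p ((0:ZMod p) * φ x)
        = (2^n : ℂ) := by
      simp [stmt5E_zero, Finset.card_univ]
    have hsplit : (N : ℂ) * p - 2^n =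
        ∑ t ∈ Finset.univ.erase (0 : ZMod p),
          stmt5E p (-(t*y)) * ∑ x : Fin n → Fin 2, stmt5E p (t * φ x) := by
      rw [hkey, ← Finset.add_sum_erase _ _ (Finset.mem_univ (0 : ZMod p)), ht0]
      ring
    have hfinal : ‖(N : ℂ) * p - 2^n‖ ≤ (p:ℝ) * (c ^ r * 2 ^ n) := by
      rw [hsplit]
      calc ‖∑ t ∈ Finset.univ.erase (0 : ZMod p),
              stmt5E p (-(t*y)) * ∑ x : Fin n → Fin 2, stmt5E p (t * φ x)‖
          ≤ ∑ t ∈ Finset.univ.erase (0 : ZMod p),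
              ‖stmt5E p (-(t*y)) * ∑ x : Fin n → Fin 2, stmt5E p (t * φ x)‖ :=
            norm_sum_le _ _
        _ ≤ ∑ t ∈ Finset.univ.erase (0 : ZMod p), c ^ r * 2 ^ n := by
            apply Finset.sum_le_sum
            intro t ht
            rw [norm_mul, stmt5E_norm, one_mul]
            exact hSt t (Finset.ne_of_mem_erase ht)
        _ ≤ (p:ℝ) * (c ^ r * 2 ^ n) := by
            rw [Finset.sum_const, nsmul_eq_mul]
            apply mul_le_mul_of_nonneg_right ?_ (by positivity)
            calc ((Finset.univ.erase (0 : ZMod p)).card : ℝ)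
                ≤ ((Finset.univ : Finset (ZMod p)).card : ℝ) := by
                  exact_mod_cast Finset.card_le_card (Finset.erase_subset _ _)
              _ = p := by rw [Finset.card_univ, ZMod.card]
    have habs : |((N : ℝ) / 2 ^ n - 1 / p)| = ‖(N : ℂ) / 2 ^ n - 1 / p‖ := by
      rw [← Real.norm_eq_abs, ← Complex.norm_real]
      congr 1
      push_cast
      ring
    have hdiv : (N : ℂ) / 2 ^ n - 1 / p = ((N : ℂ) * p - 2 ^ n) / ((p : ℂ) * 2 ^ n) := by
      have h2 : ((2:ℂ)^n) ≠ 0 := pow_ne_zero n two_ne_zero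
      have hp' : ((p:ℂ)) ≠ 0 := by exact_mod_cast (Nat.cast_ne_zero (R := ℂ)).mpr hp.ne_zero
      rw [div_sub_div _ _ h2 hp', mul_one, mul_comm ((2:ℂ)^n) (p:ℂ)]
    have hdenom : ‖((p : ℂ) * 2 ^ n)‖ = (p:ℝ) * 2 ^ n := by
      rw [norm_mul, norm_pow]
      simp
    calc |((N : ℝ) / 2 ^ n - 1 / p)|
        = ‖(N : ℂ) * p - 2 ^ n‖ / ((p:ℝ) * 2 ^ n) := by
          rw [habs, hdiv, norm_div, hdenom]
      _ ≤ ((p:ℝ) * (c ^ r * 2 ^ n)) / ((p:ℝ) * 2 ^ n) := by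
          apply div_le_div_of_nonneg_right hfinal (by positivity)
      _ = c ^ r := by field_simp
      _ ≤ (1 - ((p : ℝ)⁻¹) ^ 2) ^ (r : ℕ) := pow_le_pow_left₀ hc0 hcle r
end

section
/- Let p be a prime, let φ : F_p^n → F_p be a nonzero linear form, and let A = {x ∈ {0,1}^n : φ(x) = 0}. If A is nonempty, then |A| ≥ 2^{n−(p−1)}, i.e. A has density at least 2^{−(p−1)} in {0,1}^n. -/
open Pointwise

lemma subsetSum_min_card {p : ℕ} (hp : p.Prime) {ι : Type*} [DecidableEq ι] (S : Finset ι)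
    (c : ι → ZMod p) (hc : ∀ i ∈ S, c i ≠ 0) :
    min p (S.card + 1) ≤ (S.powerset.image fun B => ∑ i ∈ B, c i).card := by
  induction S using Finset.cons_induction with
  | empty => simp [hp.one_lt.le]
  | cons a s ha ih =>
    have hca : c a ≠ 0 := hc a (Finset.mem_cons_self a s)
    have ihs := ih (fun i hi => hc i (Finset.mem_cons_of_mem hi))
    set V : Finset (ZMod p) := s.powerset.image fun B => ∑ i ∈ B, c i with hV
    have hVne : V.Nonempty := ⟨0, Finset.mem_image.2 ⟨∅, by simp⟩⟩
    have hsub : ({0, c a} : Finset (ZMod p)) + V ⊆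
        (Finset.cons a s ha).powerset.image fun B => ∑ i ∈ B, c i := by
      intro x hx
      obtain ⟨u, hu, v, hv, rfl⟩ := Finset.mem_add.1 hx
      obtain ⟨B, hB, rfl⟩ := Finset.mem_image.1 hv
      have hBs := Finset.mem_powerset.1 hB
      rcases Finset.mem_insert.1 hu with rfl | hu
      · exact Finset.mem_image.2 ⟨B, Finset.mem_powerset.2 (hBs.trans (Finset.subset_cons ha)),
          by simp⟩
      · have : u = c a := by simpa using hu
        subst this
        have haB : a ∉ B := fun h => ha (hBs h)
        refine Finset.mem_image.2 ⟨insert a B, Finset.mem_powerset.2 ?_, ?_⟩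
        · intro i hi
          rcases Finset.mem_insert.1 hi with rfl | hi
          · exact Finset.mem_cons_self _ _
          · exact Finset.mem_cons_of_mem (hBs hi)
        · rw [Finset.sum_insert haB]
    have hcd := ZMod.cauchy_davenport hp (s := {0, c a}) (t := V) ⟨0, by simp⟩ hVne
    have h2 : ({0, c a} : Finset (ZMod p)).card = 2 := by
      rw [Finset.card_insert_of_notMem (by simpa using hca.symm), Finset.card_singleton]
    have hle := Finset.card_le_card hsub
    rw [Finset.card_cons]
    omega

lemma subsetSum_cover {p : ℕ} (hp : p.Prime) {ι : Type*} [DecidableEq ι] (S : Finset ι)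
    (c : ι → ZMod p) (hc : ∀ i ∈ S, c i ≠ 0) (hcard : p - 1 ≤ S.card) (y : ZMod p) :
    ∃ B ⊆ S, ∑ i ∈ B, c i = y := by
  haveI : Fact p.Prime := ⟨hp⟩
  have h1 := subsetSum_min_card hp S c hc
  have h2 : p ≤ (S.powerset.image fun B => ∑ i ∈ B, c i).card := by
    have := hp.one_lt
    omega
  have huniv : (S.powerset.image fun B => ∑ i ∈ B, c i) = Finset.univ := by
    apply Finset.eq_univ_of_card
    have hle := Finset.card_le_univ (S.powerset.image fun B => ∑ i ∈ B, c i)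
    have : Fintype.card (ZMod p) = p := ZMod.card p
    omega
  have : y ∈ S.powerset.image fun B => ∑ i ∈ B, c i := huniv ▸ Finset.mem_univ y
  obtain ⟨B, hB, hsum⟩ := Finset.mem_image.1 this
  exact ⟨B, Finset.mem_powerset.1 hB, hsum⟩

/-- If `φ : F_p^n → F_p` is a nonzero linear form and
`A = {x ∈ {0,1}^n : φ(x) = 0}` is nonempty, then `|A| ≥ 2^{n−(p−1)}`, i.e.
`A` has density at least `2^{−(p−1)}` in the cube. -/
theorem stmt_6 (p : ℕ) (hp : p.Prime) (n : ℕ)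
    (φ : (Fin n → ZMod p) →ₗ[ZMod p] ZMod p) (hφ : φ ≠ 0)
    (A : Finset (Fin n → Fin 2))
    (hA : A = Finset.univ.filter fun x : Fin n → Fin 2 =>
      φ (fun z => ((x z : ℕ) : ZMod p)) = 0)
    (hne : A.Nonempty) :
    (A.card : ℝ) ≥ (2 : ℝ) ^ n / 2 ^ (p - 1) := by
  classical
  set c : Fin n → ZMod p := fun i => φ (fun j => if i = j then 1 else 0) with hc
  have hφx : ∀ x : Fin n → Fin 2,
      φ (fun z => ((x z : ℕ) : ZMod p)) = ∑ i, ((x i : ℕ) : ZMod p) * c i := by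
    intro x
    conv_lhs => rw [pi_eq_sum_univ fun z => ((x z : ℕ) : ZMod p)]
    rw [map_sum]
    simp [hc, smul_eq_mul]
  -- key counting step
  have key : ∃ S : Finset (Fin n), S.card ≤ p - 1 ∧
      ∀ g : Fin n → Fin 2, (∀ i ∈ S, g i = 0) →
        ∃ x : Fin n → Fin 2, (∀ i ∉ S, x i = g i) ∧
          φ (fun z => ((x z : ℕ) : ZMod p)) = 0 := by
    set T : Finset (Fin n) := Finset.univ.filter fun i => c i ≠ 0 with hT
    by_cases hTc : T.card ≤ p - 1
    · refine ⟨T, hTc, fun g hg => ⟨g, fun _ _ => rfl, ?_⟩⟩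
      rw [hφx g]
      apply Finset.sum_eq_zero
      intro i _
      by_cases hi : i ∈ T
      · rw [hg i hi]; simp
      · have : c i = 0 := by
          by_contra h
          exact hi (Finset.mem_filter.2 ⟨Finset.mem_univ i, h⟩)
        rw [this, mul_zero]
    · obtain ⟨S, hST, hScard⟩ := Finset.exists_subset_card_eq (s := T) (n := p - 1) (by omega)
      refine ⟨S, hScard.le, fun g hg => ?_⟩
      have hcS : ∀ i ∈ S, c i ≠ 0 := fun i hi => (Finset.mem_filter.1 (hST hi)).2
      obtain ⟨B, hBS, hBsum⟩ := subsetSum_cover hp S c hcS hScard.ge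
        (-∑ i, ((g i : ℕ) : ZMod p) * c i)
      refine ⟨fun i => if i ∈ B then 1 else g i, fun i hi => ?_, ?_⟩
      · simp [fun h => hi (hBS h), if_neg (show i ∉ B from fun h => hi (hBS h))]
      · rw [hφx]
        have hterm : ∀ i : Fin n,
            (((if i ∈ B then (1 : Fin 2) else g i : Fin 2) : ℕ) : ZMod p) * c i =
              (if i ∈ B then c i else 0) + ((g i : ℕ) : ZMod p) * c i := by
          intro i
          by_cases hi : i ∈ B
          · have : g i = 0 := hg i (hBS hi)
            simp [hi, this]
          · simp [hi]
        rw [Finset.sum_congr rfl fun i _ => hterm i, Finset.sum_add_distrib]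
        rw [Finset.sum_ite_mem, Finset.univ_inter, hBsum]
        ring
  obtain ⟨S, hSle, hS⟩ := key
  -- counting
  have hcount : 2 ^ (n - S.card) ≤ A.card := by
    set C : Finset (Fin n → Fin 2) :=
      Fintype.piFinset fun i => if i ∈ S then ({0} : Finset (Fin 2)) else Finset.univ with hC
    have hCcard : C.card = 2 ^ (n - S.card) := by
      rw [hC, Fintype.card_piFinset]
      have : ∀ i : Fin n,
          (if i ∈ S then ({0} : Finset (Fin 2)) else Finset.univ).card =
            if i ∈ S then 1 else 2 := by
        intro i; by_cases hi : i ∈ S <;> simp [hi]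
      rw [Finset.prod_congr rfl fun i _ => this i,
        ← Finset.prod_mul_prod_compl S fun i => if i ∈ S then 1 else 2]
      rw [Finset.prod_congr rfl (fun i hi => if_pos hi),
        Finset.prod_congr rfl (fun i hi => if_neg (Finset.mem_compl.1 hi))]
      simp [Finset.card_compl]
    have hsub : C ⊆ A.image fun x => fun i => if i ∈ S then 0 else x i := by
      intro g hg
      have hg0 : ∀ i ∈ S, g i = 0 := by
        intro i hi
        have := Fintype.mem_piFinset.1 hg i
        simpa [hi] using this
      obtain ⟨x, hx1, hx2⟩ := hS g hg0
      refine Finset.mem_image.2 ⟨x, ?_, ?_⟩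
      · rw [hA]; exact Finset.mem_filter.2 ⟨Finset.mem_univ x, hx2⟩
      · funext i
        by_cases hi : i ∈ S
        · simp [hi, (hg0 i hi).symm]
        · simp [hi, hx1 i hi]
    calc 2 ^ (n - S.card) = C.card := hCcard.symm
      _ ≤ (A.image fun x => fun i => if i ∈ S then 0 else x i).card := Finset.card_le_card hsub
      _ ≤ A.card := Finset.card_image_le
  -- final real arithmetic
  have hnat : 2 ^ n ≤ A.card * 2 ^ (p - 1) := by
    calc 2 ^ n ≤ 2 ^ (n - S.card + (p - 1)) := Nat.pow_le_pow_right (by norm_num) (by omega)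
      _ = 2 ^ (n - S.card) * 2 ^ (p - 1) := pow_add 2 _ _
      _ ≤ A.card * 2 ^ (p - 1) := Nat.mul_le_mul_right _ hcount
  rw [ge_iff_le, div_le_iff₀ (by positivity)]
  exact_mod_cast hnat
end

section
/- Let p ≥ 3 be a prime, n ≥ p, and let Z_1, Z_2 be disjoint subsets of [n] each of size (p−1)/2. Identify x ∈ {0,1}^n with the set A = {i : x_i = 1}, let A_1 = {A ⊆ [n] : A ∩ Z_1 = ∅} and A_2 = {A ⊆ [n] : A ∩ Z_2 = ∅}, and let φ : F_p^n → F_p be the linear form φ(A) = |A ∩ Z_1| − |A ∩ Z_2| mod p. Then the correlation cor_{A_1, A_2}(φ) = (Σ_{d ∈ F_p} P_{A_1}[φ = d]·P_{A_2}[φ = d]) − 1/p equals 2^{−(p−1)} − 1/p, which is strictly negative. -/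
lemma card_zero_on (n : ℕ) (S : Finset (Fin n)) :
    (Finset.univ.filter fun x : Fin n → Fin 2 => ∀ i ∈ S, x i = 0).card = 2 ^ (n - S.card) := by
  have h : (Finset.univ.filter fun x : Fin n → Fin 2 => ∀ i ∈ S, x i = 0)
      = Fintype.piFinset (fun i => if i ∈ S then {0} else Finset.univ) := by
    ext x
    simp only [Finset.mem_filter, Finset.mem_univ, true_and, Fintype.mem_piFinset]
    constructor
    · intro h i; by_cases hi : i ∈ S <;> simp [hi, h i]
    · intro h i hi; have := h i; simpa [hi] using this
  rw [h, Fintype.card_piFinset]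
  have : ∀ i : Fin n, (if i ∈ S then ({0} : Finset (Fin 2)) else Finset.univ).card
      = if i ∈ S then 1 else 2 := by
    intro i; by_cases hi : i ∈ S <;> simp [hi]
  simp_rw [this]
  rw [Finset.prod_ite, Finset.prod_const, Finset.prod_const, one_pow, one_mul]
  congr 1
  rw [Finset.filter_not, Finset.card_sdiff_of_subset (Finset.filter_subset _ _)]
  simp [Finset.filter_mem_eq_inter]

lemma aux_lt (k : ℕ) (hk : 2 ≤ k) : k + 1 < 2 ^ k := by
  induction k with
  | zero => omega
  | succ k ih =>
    rcases Nat.lt_or_ge k 2 with h | h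
    · interval_cases k <;> simp_all
    · have := ih h; rw [pow_succ]; omega

/-- For `p ≥ 3` prime and disjoint `Z_1, Z_2 ⊆ [n]` of size `(p−1)/2`, with
`A_t = {x ∈ {0,1}^n : x_i = 0 ∀ i ∈ Z_t}` and `φ(x) = |x ∩ Z_1| − |x ∩ Z_2|`
mod `p`, the correlation `∑_d P_{A_1}[φ=d]·P_{A_2}[φ=d] − 1/p` equals
`2^{−(p−1)} − 1/p`, which is negative. -/
theorem stmt_8 (p : ℕ) [NeZero p] (hp : p.Prime) (hp3 : 3 ≤ p) (n : ℕ) (hn : p ≤ n)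
    (Z₁ Z₂ : Finset (Fin n)) (hdisj : Disjoint Z₁ Z₂)
    (hZ₁ : Z₁.card = (p - 1) / 2) (hZ₂ : Z₂.card = (p - 1) / 2)
    (A₁ A₂ : Finset (Fin n → Fin 2))
    (hA₁ : A₁ = Finset.univ.filter fun x => ∀ i ∈ Z₁, x i = 0)
    (hA₂ : A₂ = Finset.univ.filter fun x => ∀ i ∈ Z₂, x i = 0)
    (φ : (Fin n → Fin 2) → ZMod p)
    (hφ : ∀ x, φ x = ∑ i ∈ Z₁, ((x i : ℕ) : ZMod p)
      - ∑ i ∈ Z₂, ((x i : ℕ) : ZMod p)) :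
    (∑ d : ZMod p,
        (((A₁.filter fun x => φ x = d).card : ℝ) / A₁.card) *
        (((A₂.filter fun x => φ x = d).card : ℝ) / A₂.card)) - 1 / p
      = 1 / 2 ^ (p - 1) - 1 / p ∧
    (1 : ℝ) / 2 ^ (p - 1) - 1 / p < 0 := by
  have hodd : Odd p := hp.odd_of_ne_two (by omega)
  set m := (p - 1) / 2 with hm_def
  obtain ⟨k, hk⟩ := hodd
  have hm2 : 2 * m = p - 1 := by omega
  -- sums of 0/1 values are bounded by card
  have hbound : ∀ (Z : Finset (Fin n)) (x : Fin n → Fin 2),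
      (∑ i ∈ Z, (x i : ℕ)) ≤ Z.card := by
    intro Z x
    calc ∑ i ∈ Z, (x i : ℕ) ≤ ∑ i ∈ Z, 1 :=
          Finset.sum_le_sum (fun i _ => Fin.is_le (x i))
      _ = Z.card := by simp
  -- values of φ on A₁ and A₂
  have hφ₁ : ∀ x : Fin n → Fin 2, (∀ i ∈ Z₁, x i = 0) →
      φ x = - ((∑ i ∈ Z₂, (x i : ℕ) : ℕ) : ZMod p) := by
    intro x hx
    have h1 : ∑ i ∈ Z₁, ((x i : ℕ) : ZMod p) = 0 :=
      Finset.sum_eq_zero (fun i hi => by rw [hx i hi]; simp)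
    rw [hφ x, h1, zero_sub, Nat.cast_sum]
  have hφ₂ : ∀ x : Fin n → Fin 2, (∀ i ∈ Z₂, x i = 0) →
      φ x = ((∑ i ∈ Z₁, (x i : ℕ) : ℕ) : ZMod p) := by
    intro x hx
    have h2 : ∑ i ∈ Z₂, ((x i : ℕ) : ZMod p) = 0 :=
      Finset.sum_eq_zero (fun i hi => by rw [hx i hi]; simp)
    rw [hφ x, h2, sub_zero, Nat.cast_sum]
  -- key arithmetic fact
  have hkey : ∀ a b : ℕ, a ≤ m → b ≤ m → ((a : ZMod p) = -(b : ZMod p)) → a = 0 ∧ b = 0 := by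
    intro a b ha hb hab
    have h0 : ((a + b : ℕ) : ZMod p) = 0 := by push_cast; rw [hab]; ring
    have hd : p ∣ a + b := (ZMod.natCast_eq_zero_iff _ _).mp h0
    have hlt : a + b < p := by omega
    have := Nat.eq_zero_of_dvd_of_lt hd hlt
    omega
  have hcard1 : A₁.card = 2 ^ (n - m) := by rw [hA₁, card_zero_on, hZ₁]
  have hcard2 : A₂.card = 2 ^ (n - m) := by rw [hA₂, card_zero_on, hZ₂]
  -- the sum collapses to the d = 0 term
  have hsum : (∑ d : ZMod p,
        (((A₁.filter fun x => φ x = d).card : ℝ) / A₁.card) *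
        (((A₂.filter fun x => φ x = d).card : ℝ) / A₂.card))
      = (((A₁.filter fun x => φ x = 0).card : ℝ) / A₁.card) *
        (((A₂.filter fun x => φ x = 0).card : ℝ) / A₂.card) := by
    apply Finset.sum_eq_single 0
    · intro d _ hd
      by_cases h1 : (A₁.filter fun x => φ x = d).Nonempty
      · by_cases h2 : (A₂.filter fun x => φ x = d).Nonempty
        · exfalso
          obtain ⟨x, hx⟩ := h1
          obtain ⟨y, hy⟩ := h2
          rw [Finset.mem_filter, hA₁, Finset.mem_filter] at hx
          rw [Finset.mem_filter, hA₂, Finset.mem_filter] at hy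
          have e1 := hφ₁ x hx.1.2
          have e2 := hφ₂ y hy.1.2
          have hab : ((∑ i ∈ Z₁, (y i : ℕ) : ℕ) : ZMod p)
              = -((∑ i ∈ Z₂, (x i : ℕ) : ℕ) : ZMod p) := by
            rw [← e2, ← e1, hx.2, hy.2]
          obtain ⟨ha, hb⟩ := hkey _ _ (by rw [← hZ₁]; exact hbound Z₁ y)
            (by rw [← hZ₂]; exact hbound Z₂ x) hab
          apply hd
          rw [← hy.2, e2, ha, Nat.cast_zero]
        · rw [Finset.not_nonempty_iff_eq_empty] at h2
          rw [h2]; simp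
      · rw [Finset.not_nonempty_iff_eq_empty] at h1
        rw [h1]; simp
    · simp
  -- the d = 0 filters
  have hfil : ∀ (Za Zb : Finset (Fin n)),
      Za.card = m → Zb.card = m → Disjoint Za Zb →
      ∀ x : Fin n → Fin 2, (∀ i ∈ Za, x i = 0) →
      ((((∑ i ∈ Zb, (x i : ℕ)) : ℕ) : ZMod p) = 0 ↔ ∀ i ∈ Za ∪ Zb, x i = 0) := by
    intro Za Zb hZa hZb hd x hx
    constructor
    · intro h0
      have hdvd : p ∣ ∑ i ∈ Zb, (x i : ℕ) := (ZMod.natCast_eq_zero_iff _ _).mp h0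
      have hle : (∑ i ∈ Zb, (x i : ℕ)) ≤ m := by rw [← hZb]; exact hbound Zb x
      have hz : (∑ i ∈ Zb, (x i : ℕ)) = 0 :=
        Nat.eq_zero_of_dvd_of_lt hdvd (by omega)
      intro i hi
      rcases Finset.mem_union.mp hi with h | h
      · exact hx i h
      · have := (Finset.sum_eq_zero_iff.mp hz) i h
        exact Fin.ext (by simpa using this)
    · intro h
      have : (∑ i ∈ Zb, (x i : ℕ)) = 0 :=
        Finset.sum_eq_zero (fun i hi => by rw [h i (Finset.mem_union_right _ hi)]; rfl)
      rw [this]; simp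
  have hfil1 : (A₁.filter fun x => φ x = 0)
      = Finset.univ.filter fun x : Fin n → Fin 2 => ∀ i ∈ Z₁ ∪ Z₂, x i = 0 := by
    ext x
    rw [Finset.mem_filter, hA₁, Finset.mem_filter, Finset.mem_filter]
    constructor
    · rintro ⟨⟨hu, hx⟩, h0⟩
      refine ⟨hu, ?_⟩
      rw [hφ₁ x hx, neg_eq_zero] at h0
      exact (hfil Z₁ Z₂ hZ₁ hZ₂ hdisj x hx).mp h0
    · rintro ⟨hu, hx⟩
      have hx1 : ∀ i ∈ Z₁, x i = 0 := fun i hi => hx i (Finset.mem_union_left _ hi)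
      refine ⟨⟨hu, hx1⟩, ?_⟩
      rw [hφ₁ x hx1, neg_eq_zero]
      exact (hfil Z₁ Z₂ hZ₁ hZ₂ hdisj x hx1).mpr hx
  have hfil2 : (A₂.filter fun x => φ x = 0)
      = Finset.univ.filter fun x : Fin n → Fin 2 => ∀ i ∈ Z₂ ∪ Z₁, x i = 0 := by
    ext x
    rw [Finset.mem_filter, hA₂, Finset.mem_filter, Finset.mem_filter]
    constructor
    · rintro ⟨⟨hu, hx⟩, h0⟩
      refine ⟨hu, ?_⟩
      rw [hφ₂ x hx] at h0
      exact (hfil Z₂ Z₁ hZ₂ hZ₁ hdisj.symm x hx).mp h0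
    · rintro ⟨hu, hx⟩
      have hx2 : ∀ i ∈ Z₂, x i = 0 := fun i hi => hx i (Finset.mem_union_left _ hi)
      refine ⟨⟨hu, hx2⟩, ?_⟩
      rw [hφ₂ x hx2]
      exact (hfil Z₂ Z₁ hZ₂ hZ₁ hdisj.symm x hx2).mpr hx
  have hcu1 : (Z₁ ∪ Z₂).card = p - 1 := by
    rw [Finset.card_union_of_disjoint hdisj, hZ₁, hZ₂]; omega
  have hcu2 : (Z₂ ∪ Z₁).card = p - 1 := by
    rw [Finset.card_union_of_disjoint hdisj.symm, hZ₁, hZ₂]; omega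
  have hc01 : (A₁.filter fun x => φ x = 0).card = 2 ^ (n - (p - 1)) := by
    rw [hfil1, card_zero_on, hcu1]
  have hc02 : (A₂.filter fun x => φ x = 0).card = 2 ^ (n - (p - 1)) := by
    rw [hfil2, card_zero_on, hcu2]
  have hnm : n - m = (n - (p - 1)) + m := by omega
  constructor
  · rw [hsum, hc01, hc02, hcard1, hcard2]
    push_cast
    rw [hnm, pow_add]
    have h1 : (2 : ℝ) ^ (n - (p - 1)) ≠ 0 := by positivity
    have h2 : (2 : ℝ) ^ m ≠ 0 := by positivity
    have hpm : (2 : ℝ) ^ (p - 1) = 2 ^ m * 2 ^ m := by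
      rw [← pow_add]; congr 1; omega
    rw [hpm]
    field_simp
  · have hplt : (p : ℝ) < 2 ^ (p - 1) := by
      have := aux_lt (p - 1) (by omega)
      have hp' : p - 1 + 1 = p := by omega
      rw [hp'] at this
      exact_mod_cast this
    have hp0 : (0 : ℝ) < p := by positivity
    have : (1 : ℝ) / 2 ^ (p - 1) < 1 / p := by
      apply one_div_lt_one_div_of_lt hp0 hplt
    linarith
end

section
/- There exists η_0 > 0 (depending on the finite set D) such that for every random variable X with values in D and negentropy J(X) = log|D| − H(X) ≤ η < η_0, one has Σ_{x∈D} (P[X=x] − 1/|D|)^2 ≤ (8/|D|)·J(X); in particular |P[X=x] − 1/|D|| ≤ (8η/|D|)^{1/2} for every x ∈ D. -/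
open Real

/-- `log x ≥ 1 - 1/x` for `x > 0`. -/
lemma aux_log_ge {x : ℝ} (hx : 0 < x) : 1 - 1/x ≤ Real.log x := by
  have h := Real.log_le_sub_one_of_pos (show (0:ℝ) < 1/x by positivity)
  rw [Real.log_div one_ne_zero hx.ne', Real.log_one] at h
  linarith

/-- `x log x - x + 1 ≥ 0` for `x ≥ 0`. -/
lemma aux_g_nonneg {x : ℝ} (hx : 0 ≤ x) : 0 ≤ x * Real.log x - x + 1 := by
  rcases eq_or_lt_of_le hx with h | h
  · simp [← h]
  · have := aux_log_ge h
    have h2 : x * (1 - 1/x) ≤ x * Real.log x := by nlinarith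
    have : x * (1 - 1/x) = x - 1 := by field_simp
    nlinarith [h2, this]

/-- For `x ≥ 2`: `x log x - x + 1 ≥ 2 log 2 - 1`. -/
lemma aux_g_two {x : ℝ} (hx : 2 ≤ x) : 2 * Real.log 2 - 1 ≤ x * Real.log x - x + 1 := by
  have hx0 : (0:ℝ) < x := by linarith
  -- log x ≥ log 2 + (x-2)/x
  have h := Real.log_le_sub_one_of_pos (show (0:ℝ) < 2/x by positivity)
  rw [Real.log_div two_ne_zero hx0.ne'] at h
  have hlog : Real.log 2 + (x - 2)/x ≤ Real.log x := by
    have he : (2:ℝ)/x - 1 = -((x-2)/x) := by field_simp; ring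
    rw [he] at h; linarith
  have h2 : x * (Real.log 2 + (x-2)/x) ≤ x * Real.log x :=
    mul_le_mul_of_nonneg_left hlog hx0.le
  have h3 : x * (Real.log 2 + (x-2)/x) = x * Real.log 2 + (x - 2) := by field_simp
  have hl2 : (0:ℝ) ≤ Real.log 2 := Real.log_nonneg one_le_two
  nlinarith [h2, h3]

/-- Key: for `0 ≤ x ≤ 2`, `(x-1)²/4 ≤ x log x - x + 1`. -/
lemma aux_g_quad {x : ℝ} (h0 : 0 ≤ x) (h2 : x ≤ 2) :
    (x - 1)^2 / 4 ≤ x * Real.log x - x + 1 := by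
  set G : ℝ → ℝ := fun x => x * Real.log x - x + 1 - (x-1)^2/4 with hG
  suffices h : 0 ≤ G x by simp only [hG] at h; linarith
  have hG1 : G 1 = 0 := by simp [hG]
  have hderiv : ∀ y : ℝ, y ≠ 0 → HasDerivAt G (Real.log y - (y-1)/2) y := by
    intro y hy
    have h1 := Real.hasDerivAt_mul_log hy
    have h2 : HasDerivAt (fun x : ℝ => (x-1)^2/4) ((y-1)/2) y := by
      have : HasDerivAt (fun x : ℝ => (x-1)^2) (2*(y-1)) y := by
        simpa using ((hasDerivAt_id y).sub_const 1).fun_pow 2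
      have := this.div_const 4
      rw [show (y-1)/2 = 2*(y-1)/4 by ring]; exact this
    have := ((h1.sub (hasDerivAt_id y)).add_const 1).sub h2
    rw [show Real.log y - (y-1)/2 = Real.log y + 1 - 1 - (y-1)/2 by ring]; exact this
  have hcont : Continuous G := by
    have := Real.continuous_mul_log
    fun_prop
  rcases le_or_gt x 1 with hx1 | hx1
  · -- antitone on [x', 1] for x' > 0; handle x = 0 by continuity or directly
    rcases eq_or_lt_of_le h0 with h | hxpos
    · simp [hG, ← h]; norm_num
    · have hanti : AntitoneOn G (Set.Icc x 1) := by
        apply antitoneOn_of_hasDerivWithinAt_nonpos (convex_Icc x 1)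
          hcont.continuousOn
          (f' := fun y => Real.log y - (y-1)/2)
        · intro y hy
          rw [interior_Icc] at hy
          exact (hderiv y (by linarith [hy.1])).hasDerivWithinAt
        · intro y hy
          rw [interior_Icc] at hy
          have hl : Real.log y ≤ y - 1 := Real.log_le_sub_one_of_pos (by linarith [hy.1])
          have : y - 1 ≤ 0 := by linarith [hy.2]
          linarith
      have := hanti (Set.mem_Icc.2 ⟨le_refl x, hx1⟩) (Set.mem_Icc.2 ⟨hx1, le_refl 1⟩) hx1
      -- this : G 1 ≤ G x
      rw [hG1] at this; exact this
  · have hmono : MonotoneOn G (Set.Icc 1 2) := by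
      apply monotoneOn_of_hasDerivWithinAt_nonneg (convex_Icc 1 2)
        hcont.continuousOn
        (f' := fun y => Real.log y - (y-1)/2)
      · intro y hy
        rw [interior_Icc] at hy
        exact (hderiv y (by linarith [hy.1])).hasDerivWithinAt
      · intro y hy
        rw [interior_Icc] at hy
        have hy0 : (0:ℝ) < y := by linarith [hy.1]
        -- log y ≥ (y-1)/y ≥ (y-1)/2
        have hl := aux_log_ge hy0
        have : 1 - 1/y = (y-1)/y := by field_simp
        rw [this] at hl
        have : (y-1)/2 ≤ (y-1)/y := by
          apply div_le_div_of_nonneg_left (by linarith [hy.1]) hy0 (by linarith [hy.2])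
        linarith
    have := hmono (Set.mem_Icc.2 ⟨le_refl 1, one_le_two⟩) (Set.mem_Icc.2 ⟨hx1.le, h2⟩) hx1.le
    rw [hG1] at this; exact this

/-- There is `η₀ > 0` depending on the finite set `D` such that whenever a
distribution `P` on `D` has negentropy `J(P) ≤ η < η₀`, we have
`∑_x (P x − 1/|D|)² ≤ (8/|D|)·J(P)`, and in particular
`|P x − 1/|D|| ≤ (8η/|D|)^{1/2}` for every `x`. -/
theorem stmt_10 {D : Type*} [Fintype D] [Nonempty D] :
    ∃ η₀ > (0:ℝ), ∀ (P : D → ℝ), (∀ d, 0 ≤ P d) → (∑ d, P d = 1) →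
      ∀ η : ℝ, 0 ≤ η → η < η₀ →
      Real.log (Fintype.card D) - (-∑ d, P d * Real.log (P d)) ≤ η →
      (∑ d, (P d - 1 / Fintype.card D) ^ 2 ≤
        (8 / Fintype.card D) *
          (Real.log (Fintype.card D) - (-∑ d, P d * Real.log (P d))) ∧
       ∀ d, |P d - 1 / Fintype.card D| ≤
          Real.sqrt (8 * η / Fintype.card D)) := by
  set n : ℕ := Fintype.card D with hn
  have hn1 : 1 ≤ n := Fintype.card_pos
  have hnR : (1:ℝ) ≤ (n:ℝ) := by exact_mod_cast hn1
  have hnR0 : (0:ℝ) < (n:ℝ) := by linarith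
  set u : ℝ := 1 / (n:ℝ) with hu
  have hu0 : 0 < u := by positivity
  have hlog2 : (1:ℝ)/2 < Real.log 2 := by
    have := Real.log_two_gt_d9; linarith
  refine ⟨(2 * Real.log 2 - 1) / (n:ℝ), div_pos (by linarith) hnR0, ?_⟩
  intro P hP hsum η hη0 hηlt hJη
  set J : ℝ := Real.log (n:ℝ) - (-∑ d, P d * Real.log (P d)) with hJdef
  -- J = ∑ f d with f d = P d * log (n * P d) - P d + u
  have hterm : ∀ d, P d * Real.log ((n:ℝ) * P d)
      = P d * Real.log (n:ℝ) + P d * Real.log (P d) := by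
    intro d
    rcases eq_or_lt_of_le (hP d) with h | h
    · simp [← h]
    · rw [Real.log_mul hnR0.ne' h.ne']; ring
  have hJ : J = ∑ d, (P d * Real.log ((n:ℝ) * P d) - P d + u) := by
    rw [hJdef]
    rw [Finset.sum_add_distrib, Finset.sum_sub_distrib]
    simp only [hterm]
    rw [Finset.sum_add_distrib, ← Finset.sum_mul, hsum, Finset.sum_const,
      Finset.card_univ, ← hn, nsmul_eq_mul, hu]
    field_simp; ring
  -- each term equals u * g(n * P d)
  have hfg : ∀ d, P d * Real.log ((n:ℝ) * P d) - P d + u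
      = u * (((n:ℝ) * P d) * Real.log ((n:ℝ) * P d) - (n:ℝ) * P d + 1) := by
    intro d
    rw [hu]; field_simp
  have hf0 : ∀ d, 0 ≤ P d * Real.log ((n:ℝ) * P d) - P d + u := by
    intro d
    rw [hfg d]
    exact mul_nonneg hu0.le (aux_g_nonneg (mul_nonneg hnR0.le (hP d)))
  have hJ0 : 0 ≤ J := by
    rw [hJ]; exact Finset.sum_nonneg fun d _ => hf0 d
  have hfleJ : ∀ d, P d * Real.log ((n:ℝ) * P d) - P d + u ≤ J := by
    intro d
    rw [hJ]
    exact Finset.single_le_sum (fun i _ => hf0 i) (Finset.mem_univ d)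
  -- all n * P d ≤ 2
  have hx2 : ∀ d, (n:ℝ) * P d ≤ 2 := by
    intro d
    by_contra hc
    push_neg at hc
    have h1 : 2 * Real.log 2 - 1 ≤ ((n:ℝ) * P d) * Real.log ((n:ℝ) * P d) - (n:ℝ) * P d + 1 :=
      aux_g_two hc.le
    have h2 : u * (2 * Real.log 2 - 1) ≤ P d * Real.log ((n:ℝ) * P d) - P d + u := by
      rw [hfg d]
      exact mul_le_mul_of_nonneg_left h1 hu0.le
    have h3 : u * (2 * Real.log 2 - 1) = (2 * Real.log 2 - 1) / (n:ℝ) := by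
      rw [hu]; ring
    have := (h2.trans (hfleJ d)).trans hJη
    rw [h3] at this
    linarith
  -- quadratic lower bound on each term
  have hquad : ∀ d, ((n:ℝ)/4) * (P d - u)^2 ≤ P d * Real.log ((n:ℝ) * P d) - P d + u := by
    intro d
    have h1 := aux_g_quad (mul_nonneg hnR0.le (hP d)) (hx2 d)
    have h2 : u * (((n:ℝ) * P d - 1)^2 / 4) ≤ P d * Real.log ((n:ℝ) * P d) - P d + u := by
      rw [hfg d]
      exact mul_le_mul_of_nonneg_left h1 hu0.le
    have h3 : u * (((n:ℝ) * P d - 1)^2 / 4) = ((n:ℝ)/4) * (P d - u)^2 := by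
      rw [hu]; field_simp
    linarith [h2, h3.symm.le]
  have hsumquad : ((n:ℝ)/4) * ∑ d, (P d - u)^2 ≤ J := by
    rw [Finset.mul_sum, hJ]
    exact Finset.sum_le_sum fun d _ => hquad d
  have hmain : ∑ d, (P d - u)^2 ≤ (8/(n:ℝ)) * J := by
    have h4 : ∑ d, (P d - u)^2 ≤ (4/(n:ℝ)) * J := by
      rw [div_mul_eq_mul_div, le_div_iff₀ hnR0]
      nlinarith [hsumquad]
    have : (4/(n:ℝ)) * J ≤ (8/(n:ℝ)) * J := by
      apply mul_le_mul_of_nonneg_right _ hJ0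
      gcongr
      norm_num
    linarith
  refine ⟨hmain, ?_⟩
  intro d
  have hsq : (P d - u)^2 ≤ 8 * η / (n:ℝ) := by
    have h1 : (P d - u)^2 ≤ ∑ e, (P e - u)^2 :=
      Finset.single_le_sum (f := fun e => (P e - u)^2) (fun e _ => sq_nonneg _) (Finset.mem_univ d)
    have h2 : (8/(n:ℝ)) * J ≤ (8/(n:ℝ)) * η := by
      apply mul_le_mul_of_nonneg_left hJη (by positivity)
    have : (8/(n:ℝ)) * η = 8 * η / (n:ℝ) := by ring
    linarith
  exact Real.abs_le_sqrt hsq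
end
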